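/- Let 𝔪 be a measure on ℝ with log-concave density e^{−V} (V convex). For every measurable set Ω ⊂ ℝ with 0 < 𝔪(Ω) < ∞ and every σ > 0, the σ-neighborhood satisfies 𝔪(Ω^σ) ≥ 𝔪(Ω)·e^{σ h}, provided the Minkowski content bound 𝔪⁺(Ω') ≥ h·𝔪(Ω') holds for every measurable Ω' ⊃ Ω of finite measure. -/

import Mathlib

open MeasureTheory Filter Metric Set
open scoped ENNReal

section NbhdGrowthAux

noncomputable def wd (V : ℝ → ℝ) : ℝ → ℝ≥0∞ := fun t => ENNReal.ofReal (Real.exp (-V t))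

variable {V : ℝ → ℝ}

lemma contV (hV : ConvexOn ℝ Set.univ V) : Continuous V := by
  rw [← continuousOn_univ]; exact hV.continuousOn isOpen_univ

lemma measurable_wd (hV : ConvexOn ℝ Set.univ V) : Measurable (wd V) :=
  ENNReal.measurable_ofReal.comp (Real.continuous_exp.comp (contV hV).neg).measurable

lemma exp_integrableOn_Iic (a : ℝ) {c : ℝ} (hc : 0 < c) :
    IntegrableOn (fun x => Real.exp (c * x)) (Iic a) := by
  have h := exp_neg_integrableOn_Ioi (-a) hc
  have h2 : IntegrableOn ((fun x => Real.exp (-c * x)) ∘ Neg.neg) (Neg.neg ⁻¹' Ioi (-a)) volume := by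
    rw [(Measure.measurePreserving_neg (volume : Measure ℝ)).integrableOn_comp_preimage
      (Homeomorph.neg ℝ).measurableEmbedding]
    exact h
  have h3 : IntegrableOn (fun x => Real.exp (c * x)) (Iio a) := by
    simpa [Function.comp_def, neg_preimage, neg_Ioi, neg_mul, mul_neg] using h2
  exact h3.congr_set_ae (Iio_ae_eq_Iic (a := a)).symm

lemma slope_le (hV : ConvexOn ℝ Set.univ V) {a b c d : ℝ} (hab : a < b) (hcd : c < d)
    (hac : a ≤ c) (hbd : b ≤ d) :
    (V b - V a) / (b - a) ≤ (V d - V c) / (d - c) := by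
  have had : a < d := lt_of_le_of_lt hac hcd
  have h1 : (V b - V a) / (b - a) ≤ (V d - V a) / (d - a) :=
    hV.secant_mono (mem_univ a) (mem_univ b) (mem_univ d) hab.ne' had.ne' hbd
  have h2 : (V a - V d) / (a - d) ≤ (V c - V d) / (c - d) :=
    hV.secant_mono (mem_univ d) (mem_univ a) (mem_univ c) had.ne hcd.ne hac
  have e1 : (V a - V d) / (a - d) = (V d - V a) / (d - a) := by
    rw [← neg_sub (V d) (V a), ← neg_sub d a, neg_div_neg_eq]
  have e2 : (V c - V d) / (c - d) = (V d - V c) / (d - c) := by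
    rw [← neg_sub (V d) (V c), ← neg_sub d c, neg_div_neg_eq]
  rw [e1, e2] at h2
  exact h1.trans h2

lemma tail_right (hV : ConvexOn ℝ Set.univ V) {x₁ x₂ : ℝ} (h12 : x₁ < x₂) (hlt : V x₁ < V x₂) :
    volume.withDensity (wd V) (Ici x₂) < ⊤ := by
  set s := (V x₂ - V x₁) / (x₂ - x₁) with hs
  have hspos : 0 < s := div_pos (by linarith) (by linarith)
  have key : ∀ x ∈ Ici x₂, Real.exp (-V x) ≤ Real.exp ((-V x₂ + s * x₂) + -s * x) := by
    intro x hx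
    apply Real.exp_le_exp.2
    rcases eq_or_lt_of_le (mem_Ici.1 hx) with rfl | hx'
    · linarith
    · have hsl := slope_le hV h12 hx' h12.le hx'.le
      rw [← hs] at hsl
      have h2 : s * (x - x₂) ≤ V x - V x₂ := (le_div_iff₀ (by linarith)).1 hsl
      nlinarith
  have hint : IntegrableOn (fun x => Real.exp ((-V x₂ + s * x₂) + -s * x)) (Ici x₂) := by
    have := (integrableOn_Ici_iff_integrableOn_Ioi (by finiteness)).2
      ((exp_neg_integrableOn_Ioi x₂ hspos).const_mul (Real.exp (-V x₂ + s * x₂)))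
    simpa [← Real.exp_add] using this
  have hfin := hint.lintegral_lt_top
  calc volume.withDensity (wd V) (Ici x₂) = ∫⁻ x in Ici x₂, wd V x :=
        withDensity_apply _ measurableSet_Ici
    _ ≤ ∫⁻ x in Ici x₂, ENNReal.ofReal (Real.exp ((-V x₂ + s * x₂) + -s * x)) := by
        apply setLIntegral_mono
        · exact (ENNReal.measurable_ofReal.comp (by fun_prop))
        · exact fun x hx => ENNReal.ofReal_le_ofReal (key x hx)
    _ < ⊤ := hfin

lemma tail_left (hV : ConvexOn ℝ Set.univ V) {x₁ x₂ : ℝ} (h12 : x₁ < x₂) (hgt : V x₂ < V x₁) :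
    volume.withDensity (wd V) (Iic x₁) < ⊤ := by
  set s := (V x₂ - V x₁) / (x₂ - x₁) with hs
  have hsneg : s < 0 := div_neg_of_neg_of_pos (by linarith) (by linarith)
  have key : ∀ x ∈ Iic x₁, Real.exp (-V x) ≤ Real.exp ((-V x₁ + s * x₁) + -s * x) := by
    intro x hx
    apply Real.exp_le_exp.2
    rcases eq_or_lt_of_le (mem_Iic.1 hx) with rfl | hx'
    · linarith
    · have hsl := slope_le hV hx' h12 hx'.le h12.le
      rw [← hs] at hsl
      have h2 : V x₁ - V x ≤ s * (x₁ - x) := (div_le_iff₀ (by linarith)).1 hsl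
      nlinarith
  have hint : IntegrableOn (fun x => Real.exp ((-V x₁ + s * x₁) + -s * x)) (Iic x₁) := by
    have := (exp_integrableOn_Iic x₁ (c := -s) (by linarith)).const_mul
      (Real.exp (-V x₁ + s * x₁))
    simpa [← Real.exp_add, neg_mul, IntegrableOn] using this
  have hfin := hint.lintegral_lt_top
  calc volume.withDensity (wd V) (Iic x₁) = ∫⁻ x in Iic x₁, wd V x :=
        withDensity_apply _ measurableSet_Iic
    _ ≤ ∫⁻ x in Iic x₁, ENNReal.ofReal (Real.exp ((-V x₁ + s * x₁) + -s * x)) := by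
        apply setLIntegral_mono
        · exact (ENNReal.measurable_ofReal.comp (by fun_prop))
        · exact fun x hx => ENNReal.ofReal_le_ofReal (key x hx)
    _ < ⊤ := hfin

lemma interval_finite (hV : ConvexOn ℝ Set.univ V) (a b : ℝ) :
    volume.withDensity (wd V) (Icc a b) < ⊤ := by
  rcases le_or_gt a b with hab | hab
  · obtain ⟨M, hM⟩ := (isCompact_Icc (a := a) (b := b)).exists_bound_of_continuousOn
      ((Real.continuous_exp.comp (contV hV).neg).continuousOn)
    calc volume.withDensity (wd V) (Icc a b) = ∫⁻ x in Icc a b, wd V x :=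
          withDensity_apply _ measurableSet_Icc
      _ ≤ ∫⁻ _x in Icc a b, ENNReal.ofReal M := by
          apply setLIntegral_mono measurable_const
          intro x hx
          exact ENNReal.ofReal_le_ofReal (le_trans (le_abs_self _) (hM x hx))
      _ = ENNReal.ofReal M * volume (Icc a b) := by rw [setLIntegral_const]
      _ < ⊤ := ENNReal.mul_lt_top ENNReal.ofReal_lt_top (by simp [Real.volume_Icc])
  · simp [Icc_eq_empty_of_lt hab]

lemma lint_translate (w : ℝ → ℝ≥0∞) (S : Set ℝ) (hS : MeasurableSet S) (t : ℝ) :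
    ∫⁻ y in S, w (y + t) ∂volume = ∫⁻ x in (fun y => y + t) '' S, w x ∂volume := by
  have himg : (fun y => y + t) '' S = (fun x => x + -t) ⁻¹' S := by
    ext x
    simp only [mem_image, mem_preimage]
    constructor
    · rintro ⟨y, hy, rfl⟩; simpa using hy
    · intro hx; exact ⟨x + -t, hx, by ring⟩
  have hpre : MeasurableSet ((fun x : ℝ => x + -t) ⁻¹' S) := hS.preimage (by fun_prop)
  rw [himg, ← lintegral_indicator hpre, ← lintegral_indicator hS]
  rw [← lintegral_add_right_eq_self (fun x => S.indicator (fun y => w (y + t)) x) (-t)]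
  congr 1
  funext x
  by_cases hx : x + -t ∈ S
  · rw [Set.indicator_of_mem hx, Set.indicator_of_mem (show x ∈ (fun x : ℝ => x + -t) ⁻¹' S from hx)]
    congr 1; ring
  · rw [Set.indicator_of_notMem hx,
      Set.indicator_of_notMem (show x ∉ (fun x : ℝ => x + -t) ⁻¹' S from hx)]

lemma thick_subset_union (A : Set ℝ) {b c : ℝ} (hc : 0 < c) (k : ℕ) (hb : b ≤ k * c) :
    thickening b A ⊆
      ⋃ j ∈ Finset.Icc (-(k : ℤ)) (k : ℤ), (fun y => y + (j : ℝ) * c) '' thickening c A := by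
  intro x hx
  obtain ⟨y, hy, hxy⟩ := mem_thickening_iff.1 hx
  set t : ℝ := x - y with ht
  have htb : |t| < b := by rw [ht, ← Real.dist_eq]; exact hxy
  set j : ℤ := round (t / c) with hj
  have h1 : |t - j * c| ≤ c / 2 := by
    have h := abs_sub_round (t / c)
    have : |t / c - j| * c ≤ (1 / 2) * c := mul_le_mul_of_nonneg_right h hc.le
    have he : t - (j : ℝ) * c = (t / c - j) * c := by field_simp
    calc |t - j * c| = |t / c - j| * c := by rw [he, abs_mul, abs_of_pos hc]
      _ ≤ c / 2 := by linarith
  have hjk : j ∈ Finset.Icc (-(k : ℤ)) (k : ℤ) := by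
    rw [Finset.mem_Icc, ← abs_le]
    by_contra hcon
    push_neg at hcon
    have h2 : (k : ℝ) + 1 ≤ |(j : ℝ)| := by
      have : (k : ℤ) + 1 ≤ |j| := hcon
      calc ((k : ℝ) + 1) = ((k + 1 : ℤ) : ℝ) := by push_cast; ring
        _ ≤ ((|j| : ℤ) : ℝ) := by exact_mod_cast this
        _ = |(j : ℝ)| := by push_cast; ring
    have h3 : |(j : ℝ)| * c ≤ |t| + c / 2 := by
      calc |(j : ℝ)| * c = |(j : ℝ) * c| := by rw [abs_mul, abs_of_pos hc]
        _ = |t + -(t - (j : ℝ) * c)| := by rw [show t + -(t - (j : ℝ) * c) = (j : ℝ) * c by ring]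
        _ ≤ |t| + |-(t - (j : ℝ) * c)| := abs_add_le _ _
        _ = |t| + |t - (j : ℝ) * c| := by rw [abs_neg]
        _ ≤ |t| + c / 2 := by linarith
    nlinarith [htb, hc]
  refine mem_biUnion hjk ⟨x - (j : ℝ) * c, ?_, by ring⟩
  apply mem_thickening_iff.2
  refine ⟨y, hy, ?_⟩
  rw [Real.dist_eq]
  have : x - (j : ℝ) * c - y = t - j * c := by rw [ht]; ring
  rw [this]
  linarith [h1, hc]

lemma wd_le_mul {y t K : ℝ} (hK : V y - K ≤ V (y + t)) :
    wd V (y + t) ≤ ENNReal.ofReal (Real.exp K) * wd V y := by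
  unfold wd
  rw [← ENNReal.ofReal_mul (Real.exp_pos _).le, ← Real.exp_add]
  exact ENNReal.ofReal_le_ofReal (Real.exp_le_exp.2 (by linarith))

lemma translate_finite_right (hV : ConvexOn ℝ Set.univ V) {x₁ x₂ : ℝ} (h12 : x₁ < x₂)
    (hlt : V x₁ < V x₂) (hmono : ∀ u v : ℝ, u ≤ v → V u ≤ V v)
    {S : Set ℝ} (hS : MeasurableSet S) (hSfin : volume.withDensity (wd V) S < ⊤)
    {t R : ℝ} (hR : 0 ≤ R) (htR : |t| ≤ R) :
    ∫⁻ y in S, wd V (y + t) ∂volume < ⊤ := by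
  set s := (V x₂ - V x₁) / (x₂ - x₁) with hs
  have hspos : 0 < s := div_pos (by linarith) (by linarith)
  set z := x₁ - R with hz
  have hsplit : S = (S ∩ Iic z) ∪ (S ∩ Ioi z) := by
    rw [← inter_union_distrib_left, Iic_union_Ioi, inter_univ]
  have hmeasB : MeasurableSet (S ∩ Ioi z) := hS.inter measurableSet_Ioi
  have hdisj : Disjoint (S ∩ Iic z) (S ∩ Ioi z) := by
    apply Disjoint.mono inter_subset_right inter_subset_right
    exact Iic_disjoint_Ioi le_rfl
  have heq : ∫⁻ y in S, wd V (y + t) ∂volume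
      = (∫⁻ y in S ∩ Iic z, wd V (y + t) ∂volume) + ∫⁻ y in S ∩ Ioi z, wd V (y + t) ∂volume := by
    conv_lhs => rw [hsplit]
    exact lintegral_union hmeasB hdisj
  rw [heq]
  have bound1 : ∫⁻ y in S ∩ Iic z, wd V (y + t) ∂volume
      ≤ ENNReal.ofReal (Real.exp (s * R)) * volume.withDensity (wd V) S := by
    have hpt : ∀ y ∈ S ∩ Iic z, wd V (y + t) ≤ ENNReal.ofReal (Real.exp (s * R)) * wd V y := by
      intro y hy
      apply wd_le_mul
      rcases le_or_gt y (y + t) with hyt | hyt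
      · have := hmono y (y + t) hyt
        nlinarith
      · have hy1 : y ≤ x₁ := by
          have := hy.2
          simp only [mem_Iic] at this
          linarith
        have hsl := slope_le hV hyt h12 (by linarith) (by linarith)
        rw [← hs] at hsl
        have h2 : V y - V (y + t) ≤ s * (y - (y + t)) := by
          have hpos : (0 : ℝ) < y - (y + t) := by linarith
          exact (div_le_iff₀ hpos).1 hsl
        have h3 : y - (y + t) ≤ R := by
          have : -t ≤ |t| := neg_le_abs t
          linarith
        nlinarith
    calc ∫⁻ y in S ∩ Iic z, wd V (y + t) ∂volume
        ≤ ∫⁻ y in S ∩ Iic z, ENNReal.ofReal (Real.exp (s * R)) * wd V y ∂volume :=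
          setLIntegral_mono ((measurable_wd hV).const_mul _) hpt
      _ = ENNReal.ofReal (Real.exp (s * R)) * ∫⁻ y in S ∩ Iic z, wd V y ∂volume :=
          lintegral_const_mul _ (measurable_wd hV)
      _ ≤ ENNReal.ofReal (Real.exp (s * R)) * volume.withDensity (wd V) S := by
          rw [withDensity_apply _ hS]
          exact mul_le_mul_right (lintegral_mono_set inter_subset_left) _
  have bound2 : ∫⁻ y in S ∩ Ioi z, wd V (y + t) ∂volume
      ≤ volume.withDensity (wd V) (Icc (x₁ - 2 * R) x₂) + volume.withDensity (wd V) (Ici x₂) := by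
    calc ∫⁻ y in S ∩ Ioi z, wd V (y + t) ∂volume
        ≤ ∫⁻ y in Ioi z, wd V (y + t) ∂volume := lintegral_mono_set inter_subset_right
      _ = ∫⁻ x in Ioi (z + t), wd V x ∂volume := by
          rw [lint_translate (wd V) _ measurableSet_Ioi, image_add_const_Ioi]
      _ = volume.withDensity (wd V) (Ioi (z + t)) := (withDensity_apply _ measurableSet_Ioi).symm
      _ ≤ volume.withDensity (wd V) (Icc (x₁ - 2 * R) x₂ ∪ Ici x₂) := by
          apply measure_mono
          intro u hu
          simp only [mem_Ioi] at hu
          have hu2 : x₁ - 2 * R < u := by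
            have : -R ≤ t := by
              have := neg_abs_le t; linarith
            simp only [hz] at hu
            linarith
          rcases le_or_gt u x₂ with h | h
          · exact Or.inl ⟨by linarith, h⟩
          · exact Or.inr h.le
      _ ≤ _ := measure_union_le _ _
  have fin1 : ENNReal.ofReal (Real.exp (s * R)) * volume.withDensity (wd V) S < ⊤ :=
    ENNReal.mul_lt_top ENNReal.ofReal_lt_top hSfin
  have fin2 : volume.withDensity (wd V) (Icc (x₁ - 2 * R) x₂) + volume.withDensity (wd V) (Ici x₂) < ⊤ :=
    ENNReal.add_lt_top.2 ⟨interval_finite hV _ _, tail_right hV h12 hlt⟩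
  exact ENNReal.add_lt_top.2 ⟨lt_of_le_of_lt bound1 fin1, lt_of_le_of_lt bound2 fin2⟩

lemma translate_finite_left (hV : ConvexOn ℝ Set.univ V) {x₁ x₂ : ℝ} (h12 : x₁ < x₂)
    (hgt : V x₂ < V x₁) (hanti : ∀ u v : ℝ, u ≤ v → V v ≤ V u)
    {S : Set ℝ} (hS : MeasurableSet S) (hSfin : volume.withDensity (wd V) S < ⊤)
    {t R : ℝ} (hR : 0 ≤ R) (htR : |t| ≤ R) :
    ∫⁻ y in S, wd V (y + t) ∂volume < ⊤ := by
  set s := (V x₂ - V x₁) / (x₂ - x₁) with hs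
  have hsneg : s < 0 := div_neg_of_neg_of_pos (by linarith) (by linarith)
  set z := x₂ + R with hz
  have hsplit : S = (S ∩ Iio z) ∪ (S ∩ Ici z) := by
    rw [← inter_union_distrib_left, Iio_union_Ici, inter_univ]
  have hmeasB : MeasurableSet (S ∩ Ici z) := hS.inter measurableSet_Ici
  have hdisj : Disjoint (S ∩ Iio z) (S ∩ Ici z) := by
    apply Disjoint.mono inter_subset_right inter_subset_right
    exact Iio_disjoint_Ici le_rfl
  have heq : ∫⁻ y in S, wd V (y + t) ∂volume
      = (∫⁻ y in S ∩ Iio z, wd V (y + t) ∂volume) + ∫⁻ y in S ∩ Ici z, wd V (y + t) ∂volume := by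
    conv_lhs => rw [hsplit]
    exact lintegral_union hmeasB hdisj
  rw [heq]
  have bound1 : ∫⁻ y in S ∩ Ici z, wd V (y + t) ∂volume
      ≤ ENNReal.ofReal (Real.exp (-s * R)) * volume.withDensity (wd V) S := by
    have hpt : ∀ y ∈ S ∩ Ici z, wd V (y + t) ≤ ENNReal.ofReal (Real.exp (-s * R)) * wd V y := by
      intro y hy
      apply wd_le_mul
      rcases le_or_gt (y + t) y with hyt | hyt
      · have := hanti (y + t) y hyt
        nlinarith
      · have hy1 : x₂ ≤ y := by
          have := hy.2
          simp only [mem_Ici] at this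
          linarith
        have hsl := slope_le hV h12 hyt (by linarith) (by linarith)
        rw [← hs] at hsl
        have h2 : s * (y + t - y) ≤ V (y + t) - V y := by
          have hpos : (0 : ℝ) < y + t - y := by linarith
          exact (le_div_iff₀ hpos).1 hsl
        have h3 : y + t - y ≤ R := by
          have : t ≤ |t| := le_abs_self t
          linarith
        nlinarith
    calc ∫⁻ y in S ∩ Ici z, wd V (y + t) ∂volume
        ≤ ∫⁻ y in S ∩ Ici z, ENNReal.ofReal (Real.exp (-s * R)) * wd V y ∂volume :=
          setLIntegral_mono ((measurable_wd hV).const_mul _) hpt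
      _ = ENNReal.ofReal (Real.exp (-s * R)) * ∫⁻ y in S ∩ Ici z, wd V y ∂volume :=
          lintegral_const_mul _ (measurable_wd hV)
      _ ≤ ENNReal.ofReal (Real.exp (-s * R)) * volume.withDensity (wd V) S := by
          rw [withDensity_apply _ hS]
          exact mul_le_mul_right (lintegral_mono_set inter_subset_left) _
  have bound2 : ∫⁻ y in S ∩ Iio z, wd V (y + t) ∂volume
      ≤ volume.withDensity (wd V) (Iic x₁) + volume.withDensity (wd V) (Icc x₁ (x₂ + 2 * R)) := by
    calc ∫⁻ y in S ∩ Iio z, wd V (y + t) ∂volume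
        ≤ ∫⁻ y in Iio z, wd V (y + t) ∂volume := lintegral_mono_set inter_subset_right
      _ = ∫⁻ x in Iio (z + t), wd V x ∂volume := by
          rw [lint_translate (wd V) _ measurableSet_Iio, image_add_const_Iio]
      _ = volume.withDensity (wd V) (Iio (z + t)) := (withDensity_apply _ measurableSet_Iio).symm
      _ ≤ volume.withDensity (wd V) (Iic x₁ ∪ Icc x₁ (x₂ + 2 * R)) := by
          apply measure_mono
          intro u hu
          simp only [mem_Iio] at hu
          have hu2 : u < x₂ + 2 * R := by
            have : t ≤ R := le_trans (le_abs_self t) htR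
            simp only [hz] at hu
            linarith
          rcases le_or_gt u x₁ with h | h
          · exact Or.inl h
          · exact Or.inr ⟨h.le, hu2.le⟩
      _ ≤ _ := measure_union_le _ _
  have fin1 : ENNReal.ofReal (Real.exp (-s * R)) * volume.withDensity (wd V) S < ⊤ :=
    ENNReal.mul_lt_top ENNReal.ofReal_lt_top hSfin
  have fin2 : volume.withDensity (wd V) (Iic x₁) + volume.withDensity (wd V) (Icc x₁ (x₂ + 2 * R)) < ⊤ :=
    ENNReal.add_lt_top.2 ⟨tail_left hV h12 hgt, interval_finite hV _ _⟩
  exact ENNReal.add_lt_top.2 ⟨lt_of_le_of_lt bound2 fin2, lt_of_le_of_lt bound1 fin1⟩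

lemma image_add_eq_preimage (S : Set ℝ) (t : ℝ) :
    (fun y => y + t) '' S = (fun x => x + -t) ⁻¹' S := by
  ext x
  simp only [mem_image, mem_preimage]
  constructor
  · rintro ⟨y, hy, rfl⟩; simpa using hy
  · intro hx; exact ⟨x + -t, hx, by ring⟩

lemma finite_of_translates {A : Set ℝ} {c : ℝ} (hc : 0 < c) (b : ℝ) (k : ℕ) (hb : b ≤ k * c)
    (H : ∀ t : ℝ, |t| ≤ (k : ℝ) * c → ∫⁻ y in thickening c A, wd V (y + t) ∂volume < ⊤) :
    volume.withDensity (wd V) (thickening b A) < ⊤ := by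
  have hT : MeasurableSet (thickening c A) := isOpen_thickening.measurableSet
  have hmeas : ∀ j : ℤ, MeasurableSet ((fun y => y + (j : ℝ) * c) '' thickening c A) := by
    intro j
    rw [image_add_eq_preimage]
    exact hT.preimage (measurable_add_const _)
  calc volume.withDensity (wd V) (thickening b A)
      ≤ volume.withDensity (wd V)
          (⋃ j ∈ Finset.Icc (-(k : ℤ)) (k : ℤ), (fun y => y + (j : ℝ) * c) '' thickening c A) :=
        measure_mono (thick_subset_union A hc k hb)
    _ ≤ ∑ j ∈ Finset.Icc (-(k : ℤ)) (k : ℤ),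
          volume.withDensity (wd V) ((fun y => y + (j : ℝ) * c) '' thickening c A) :=
        measure_biUnion_finset_le _ _
    _ < ⊤ := by
        rw [ENNReal.sum_lt_top]
        intro j hj
        rw [withDensity_apply _ (hmeas j), ← lint_translate (wd V) _ hT]
        apply H
        rw [Finset.mem_Icc, ← abs_le] at hj
        calc |(j : ℝ) * c| = |(j : ℝ)| * c := by rw [abs_mul, abs_of_pos hc]
          _ ≤ (k : ℝ) * c := by
              apply mul_le_mul_of_nonneg_right _ hc.le
              exact_mod_cast (by exact_mod_cast hj : |j| ≤ (k : ℤ))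

lemma finite_of_finite (hV : ConvexOn ℝ Set.univ V) {A : Set ℝ} {c : ℝ} (hc : 0 < c)
    (hfin : volume.withDensity (wd V) (thickening c A) < ⊤) (b : ℝ) :
    volume.withDensity (wd V) (thickening b A) < ⊤ := by
  obtain ⟨k, hk⟩ : ∃ k : ℕ, b ≤ k * c := by
    obtain ⟨k, hk⟩ := exists_nat_ge (b / c)
    exact ⟨k, by rwa [div_le_iff₀ hc] at hk⟩
  have hT : MeasurableSet (thickening c A) := isOpen_thickening.measurableSet
  have hR : (0 : ℝ) ≤ (k : ℝ) * c := mul_nonneg (Nat.cast_nonneg k) hc.le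
  apply finite_of_translates hc b k hk
  by_cases hInc : ∃ p q : ℝ, p < q ∧ V p < V q
  · by_cases hDec : ∃ p q : ℝ, p < q ∧ V q < V p
    · -- both: μ univ < ⊤
      obtain ⟨p, q, hpq, hVpq⟩ := hInc
      obtain ⟨r, u, hru, hVru⟩ := hDec
      have huniv : volume.withDensity (wd V) univ < ⊤ := by
        have hsub : (univ : Set ℝ) ⊆ Iic r ∪ (Icc r (max q r) ∪ Ici (max q r)) := by
          intro x _
          rcases le_or_gt x r with h | h
          · exact Or.inl h
          · rcases le_or_gt x (max q r) with h2 | h2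
            · exact Or.inr (Or.inl ⟨h.le, h2⟩)
            · exact Or.inr (Or.inr h2.le)
        calc volume.withDensity (wd V) univ
            ≤ volume.withDensity (wd V) (Iic r) +
              (volume.withDensity (wd V) (Icc r (max q r)) +
               volume.withDensity (wd V) (Ici (max q r))) :=
              le_trans (measure_mono hsub)
                (le_trans (measure_union_le _ _) (by gcongr; exact measure_union_le _ _))
          _ < ⊤ := by
              refine ENNReal.add_lt_top.2 ⟨tail_left hV hru hVru, ENNReal.add_lt_top.2
                ⟨interval_finite hV _ _, ?_⟩⟩
              exact lt_of_le_of_lt (measure_mono (Ici_subset_Ici.2 (le_max_left q r)))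
                (tail_right hV hpq hVpq)
      intro t _
      calc ∫⁻ y in thickening c A, wd V (y + t) ∂volume
          ≤ ∫⁻ y, wd V (y + t) ∂volume := setLIntegral_le_lintegral _ _
        _ = ∫⁻ y, wd V y ∂volume := lintegral_add_right_eq_self _ t
        _ = volume.withDensity (wd V) univ := by
            rw [withDensity_apply _ MeasurableSet.univ, setLIntegral_univ]
        _ < ⊤ := huniv
    · -- V nondecreasing
      push_neg at hDec
      have hmono : ∀ x y : ℝ, x ≤ y → V x ≤ V y := by
        intro x y hxy
        rcases eq_or_lt_of_le hxy with rfl | h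
        · exact le_rfl
        · exact hDec x y h
      obtain ⟨p, q, hpq, hVpq⟩ := hInc
      exact fun t ht => translate_finite_right hV hpq hVpq hmono hT hfin hR ht
  · by_cases hDec : ∃ p q : ℝ, p < q ∧ V q < V p
    · push_neg at hInc
      have hanti : ∀ x y : ℝ, x ≤ y → V y ≤ V x := by
        intro x y hxy
        rcases eq_or_lt_of_le hxy with rfl | h
        · exact le_rfl
        · exact hInc x y h
      obtain ⟨p, q, hpq, hVpq⟩ := hDec
      exact fun t ht => translate_finite_left hV hpq hVpq hanti hT hfin hR ht
    · -- constant
      push_neg at hInc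
      push_neg at hDec
      have hconst : ∀ x y : ℝ, V x = V y := by
        intro x y
        rcases lt_trichotomy x y with h | h | h
        · exact le_antisymm (hDec x y h) (hInc x y h)
        · rw [h]
        · exact le_antisymm (hInc y x h) (hDec y x h)
      intro t _
      have : (fun y => wd V (y + t)) = fun y => wd V y := by
        funext y
        unfold wd
        rw [hconst (y + t) y]
      rw [this, ← withDensity_apply _ hT]
      exact hfin

lemma cont_le_of_forall_lt {f : ℝ → ℝ} (hf : Continuous f) {s B : ℝ}
    (hub : ∀ τ : ℝ, τ < s → f τ ≤ B) : f s ≤ B := by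
  have hcont : Filter.Tendsto f (nhdsWithin s (Iio s)) (nhds (f s)) :=
    (hf.tendsto s).mono_left nhdsWithin_le_nhds
  exact le_of_tendsto hcont (eventually_nhdsWithin_of_forall (fun τ hτ => hub τ hτ))

lemma gronwall {g : ℝ → ℝ} {σ h g0 : ℝ} (hσ : 0 < σ) (hh : 0 < h) (hg0 : g 0 = g0)
    (hg0pos : 0 < g0)
    (mono : ∀ x y : ℝ, 0 ≤ x → x ≤ y → g x ≤ g y)
    (dini : ∀ x : ℝ, 0 ≤ x → ∀ c' : ℝ, 0 < c' → c' < h * g x →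
      ∀ᶠ ε in nhdsWithin 0 (Ioi (0:ℝ)), c' * ε ≤ g (x + ε) - g x) :
    g0 * Real.exp (σ * h) ≤ g σ := by
  have key : ∀ c ∈ Ioo (0:ℝ) h, g0 * Real.exp (c * σ) ≤ g σ := by
    intro c hc
    set S : Set ℝ := {x | x ∈ Icc 0 σ ∧ g0 * Real.exp (c * x) ≤ g x} with hS
    have h0S : (0 : ℝ) ∈ S := by
      constructor
      · exact ⟨le_rfl, hσ.le⟩
      · simp [hg0]
    have hbdd : BddAbove S := ⟨σ, fun x hx => hx.1.2⟩
    have hne : S.Nonempty := ⟨0, h0S⟩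
    set s := sSup S with hsdef
    have hs0 : 0 ≤ s := le_csSup hbdd h0S
    have hsσ : s ≤ σ := csSup_le hne fun x hx => hx.1.2
    have hgs : g0 * Real.exp (c * s) ≤ g s := by
      have hub : ∀ τ : ℝ, τ < s → g0 * Real.exp (c * τ) ≤ g s := by
        intro τ hτ
        obtain ⟨x, hxS, hτx⟩ := exists_lt_of_lt_csSup hne hτ
        have hxs : x ≤ s := le_csSup hbdd hxS
        calc g0 * Real.exp (c * τ) ≤ g0 * Real.exp (c * x) := by
              apply mul_le_mul_of_nonneg_left _ hg0pos.le
              exact Real.exp_le_exp.2 (mul_le_mul_of_nonneg_left hτx.le hc.1.le)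
          _ ≤ g x := hxS.2
          _ ≤ g s := mono x s hxS.1.1 hxs
      exact cont_le_of_forall_lt (f := fun τ : ℝ => g0 * Real.exp (c * τ)) (by fun_prop) hub
    rcases eq_or_lt_of_le hsσ with heq | hlt
    · rw [← heq]; exact hgs
    · exfalso
      set ct : ℝ := (c + h) / 2 with hct
      have hcct : c < ct := by rw [hct]; linarith [hc.2]
      have hcth : ct < h := by rw [hct]; linarith [hc.2]
      set c' : ℝ := ct * (g0 * Real.exp (c * s)) with hc'
      have hexps : 0 < g0 * Real.exp (c * s) := mul_pos hg0pos (Real.exp_pos _)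
      have hc'pos : 0 < c' := mul_pos (by linarith [hc.1]) hexps
      have hc'lt : c' < h * g s :=
        lt_of_lt_of_le (mul_lt_mul_of_pos_right hcth hexps)
          (mul_le_mul_of_nonneg_left hgs hh.le)
      have ev1 := dini s hs0 c' hc'pos hc'lt
      have ev2 : ∀ᶠ ε in nhdsWithin 0 (Ioi (0:ℝ)), Real.exp (c * ε) ≤ 1 + ct * ε := by
        have hderiv : HasDerivAt (fun ε : ℝ => Real.exp (c * ε)) c 0 := by
          have := ((hasDerivAt_id (0:ℝ)).const_mul c).exp
          simpa using this
        have hslope : Tendsto (slope (fun ε : ℝ => Real.exp (c * ε)) 0)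
            (nhdsWithin 0 {(0:ℝ)}ᶜ) (nhds c) := hasDerivAt_iff_tendsto_slope.1 hderiv
        have hmonof : nhdsWithin (0:ℝ) (Ioi 0) ≤ nhdsWithin 0 {(0:ℝ)}ᶜ :=
          nhdsWithin_mono 0 fun x hx => ne_of_gt hx
        have hev := (hslope.mono_left hmonof).eventually_lt_const hcct
        filter_upwards [hev, self_mem_nhdsWithin] with ε hε hεpos
        rw [slope_def_field] at hε
        simp only [mem_Ioi] at hεpos
        rw [mul_zero, Real.exp_zero] at hε
        have := (div_lt_iff₀ (by linarith : (0:ℝ) < ε - 0)).1 hε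
        nlinarith
      have ev3 : ∀ᶠ ε in nhdsWithin 0 (Ioi (0:ℝ)), ε < σ - s := by
        filter_upwards [Ioo_mem_nhdsGT_of_mem
          (⟨le_rfl, sub_pos.2 hlt⟩ : (0:ℝ) ∈ Ico 0 (σ - s))] with ε hε
        exact hε.2
      have ev4 : ∀ᶠ ε in nhdsWithin 0 (Ioi (0:ℝ)), 0 < ε := by
        filter_upwards [self_mem_nhdsWithin] with ε hε
        exact hε
      obtain ⟨ε, h1, h2, h3, h4⟩ := (ev1.and (ev2.and (ev3.and ev4))).exists
      have hgstep : g0 * Real.exp (c * (s + ε)) ≤ g (s + ε) := by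
        have e1 : g s + c' * ε ≤ g (s + ε) := by linarith
        have e2 : g0 * Real.exp (c * s) * (1 + ct * ε) ≤ g s + c' * ε := by
          rw [hc']; nlinarith [hgs]
        have e3 : g0 * Real.exp (c * (s + ε)) ≤ g0 * Real.exp (c * s) * (1 + ct * ε) := by
          rw [mul_add, Real.exp_add, ← mul_assoc]
          apply mul_le_mul_of_nonneg_left h2 (by positivity)
        linarith
      have hmem : s + ε ∈ S := ⟨⟨by linarith, by linarith⟩, hgstep⟩
      have := le_csSup hbdd hmem
      linarith
  have hfin : g0 * Real.exp (h * σ) ≤ g σ := by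
    apply cont_le_of_forall_lt (f := fun c : ℝ => g0 * Real.exp (c * σ)) (by fun_prop)
    intro c hch
    rcases le_or_gt c 0 with hc0 | hc0
    · calc g0 * Real.exp (c * σ) ≤ g0 * Real.exp ((h/2) * σ) := by
            apply mul_le_mul_of_nonneg_left _ hg0pos.le
            apply Real.exp_le_exp.2
            nlinarith
        _ ≤ g σ := key (h/2) ⟨by linarith, by linarith⟩
    · exact key c ⟨hc0, hch⟩
  rwa [mul_comm h σ] at hfin

end NbhdGrowthAux

/-- Minkowski content of a set with respect to a measure. -/
noncomputable def minkowskiContent {X : Type*} [PseudoMetricSpace X] [MeasurableSpace X]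
    (μ : Measure X) (Ω : Set X) : ℝ :=
  liminf (fun ε : ℝ => ((μ (thickening ε Ω)).toReal - (μ Ω).toReal) / ε) (nhdsWithin 0 (Ioi 0))

/-- exponential growth of neighborhoods under a linear isoperimetric
inequality, for a log-concave measure on `ℝ`. -/
theorem neighborhood_exponential_growth
    (V : ℝ → ℝ) (hV : ConvexOn ℝ Set.univ V)
    (μ : Measure ℝ)
    (hμ : μ = volume.withDensity (fun t => ENNReal.ofReal (Real.exp (-V t))))
    (h : ℝ) (hh : 0 < h)
    (Ω : Set ℝ) (hΩmeas : MeasurableSet Ω) (hΩpos : 0 < μ Ω) (hΩfin : μ Ω < ⊤)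
    (hiso : ∀ Ω' : Set ℝ, MeasurableSet Ω' → Ω ⊆ Ω' → μ Ω' < ⊤ →
      minkowskiContent μ Ω' ≥ h * (μ Ω').toReal) :
    ∀ σ : ℝ, 0 < σ →
      (μ (thickening σ Ω)).toReal ≥ (μ Ω).toReal * Real.exp (σ * h) := by
  intro σ hσ
  have hμwd : μ = volume.withDensity (wd V) := hμ
  set m := (μ Ω).toReal with hm
  have hmpos : 0 < m := ENNReal.toReal_pos hΩpos.ne' hΩfin.ne
  -- global finiteness of thickenings
  have hfin_all : ∀ b : ℝ, μ (thickening b Ω) < ⊤ := by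
    by_cases hex : ∃ c : ℝ, 0 < c ∧ μ (thickening c Ω) < ⊤
    · obtain ⟨c, hc, hfin⟩ := hex
      intro b
      rw [hμwd]
      rw [hμwd] at hfin
      exact finite_of_finite hV hc hfin b
    · exfalso
      push_neg at hex
      have htop : ∀ ε : ℝ, 0 < ε → μ (thickening ε Ω) = ⊤ :=
        fun ε hε => top_le_iff.1 (hex ε hε)
      have hmc := hiso Ω hΩmeas (subset_refl _) hΩfin
      have hzero : minkowskiContent μ Ω = 0 := by
        have hrfl : minkowskiContent μ Ω =
            liminf (fun ε : ℝ => ((μ (thickening ε Ω)).toReal - (μ Ω).toReal) / ε)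
              (nhdsWithin 0 (Ioi 0)) := rfl
        rw [hrfl, liminf_eq]
        have hempty : {a : ℝ | ∀ᶠ ε in nhdsWithin (0:ℝ) (Ioi 0),
            a ≤ ((μ (thickening ε Ω)).toReal - (μ Ω).toReal) / ε} = ∅ := by
          rw [eq_empty_iff_forall_notMem]
          intro a ha
          simp only [mem_setOf_eq] at ha
          have hbot : Tendsto (fun ε : ℝ => (0 - m) / ε) (nhdsWithin (0:ℝ) (Ioi 0)) atBot := by
            simp only [div_eq_mul_inv]
            exact (tendsto_const_mul_atBot_of_neg (by linarith)).2 tendsto_inv_nhdsGT_zero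
          have hev2 : ∀ᶠ ε in nhdsWithin (0:ℝ) (Ioi 0), (0 - m) / ε < a :=
            hbot.eventually (eventually_lt_atBot a)
          have hev3 : ∀ᶠ ε in nhdsWithin (0:ℝ) (Ioi 0),
              ((μ (thickening ε Ω)).toReal - (μ Ω).toReal) / ε = (0 - m) / ε := by
            filter_upwards [self_mem_nhdsWithin] with ε hε
            rw [htop ε hε, ← hm]
            simp
          obtain ⟨ε, h1, h2, h3⟩ := (ha.and (hev2.and hev3)).exists
          rw [h3] at h1
          linarith
        rw [hempty, Real.sSup_empty]
      rw [hzero] at hmc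
      nlinarith
  -- the growth function
  set gg : ℝ → ℝ := fun x => if 0 < x then (μ (thickening x Ω)).toReal else m with hgg
  have hval : ∀ x : ℝ, 0 < x → gg x = (μ (thickening x Ω)).toReal := by
    intro x hx; simp only [hgg, if_pos hx]
  have hg0 : gg 0 = m := by simp [hgg]
  have hmono : ∀ x y : ℝ, 0 ≤ x → x ≤ y → gg x ≤ gg y := by
    intro x y hx hxy
    rcases lt_or_ge 0 y with hy | hy
    · rw [hval y hy]
      rcases lt_or_ge 0 x with hx' | hx'
      · rw [hval x hx']
        exact ENNReal.toReal_mono (hfin_all y).ne (measure_mono (thickening_mono hxy Ω))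
      · have : gg x = m := by simp only [hgg, if_neg (not_lt.2 hx')]
        rw [this, hm]
        exact ENNReal.toReal_mono (hfin_all y).ne (measure_mono (self_subset_thickening hy Ω))
    · have hx0 : ¬ 0 < x := not_lt.2 (le_trans hxy hy)
      have hy0 : ¬ 0 < y := not_lt.2 hy
      simp only [hgg, if_neg hx0, if_neg hy0, le_refl]
  have hdini : ∀ x : ℝ, 0 ≤ x → ∀ c' : ℝ, 0 < c' → c' < h * gg x →
      ∀ᶠ ε in nhdsWithin 0 (Ioi (0:ℝ)), c' * ε ≤ gg (x + ε) - gg x := by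
    intro x hx c' hc' hc'lt
    have main : ∀ Ω' : Set ℝ, MeasurableSet Ω' → Ω ⊆ Ω' → μ Ω' < ⊤ →
        (∀ ε : ℝ, 0 < ε → thickening ε Ω' = thickening (x + ε) Ω) →
        gg x = (μ Ω').toReal →
        ∀ᶠ ε in nhdsWithin 0 (Ioi (0:ℝ)), c' * ε ≤ gg (x + ε) - gg x := by
      intro Ω' hmeas hsub hfin hthick hgx
      have hiso' := hiso Ω' hmeas hsub hfin
      set q : ℝ → ℝ := fun ε => ((μ (thickening ε Ω')).toReal - (μ Ω').toReal) / ε with hq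
      have hrfl : minkowskiContent μ Ω' = liminf q (nhdsWithin 0 (Ioi 0)) := rfl
      have hLq : c' < liminf q (nhdsWithin (0:ℝ) (Ioi 0)) := by
        rw [← hrfl]
        calc c' < h * gg x := hc'lt
          _ = h * (μ Ω').toReal := by rw [hgx]
          _ ≤ minkowskiContent μ Ω' := hiso'
      have hnb : IsBoundedUnder (· ≥ ·) (nhdsWithin (0:ℝ) (Ioi 0)) q := by
        by_contra hcon
        have hempty : {a : ℝ | ∀ᶠ ε in nhdsWithin (0:ℝ) (Ioi 0), a ≤ q ε} = ∅ := by
          rw [eq_empty_iff_forall_notMem]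
          intro a ha
          exact hcon ⟨a, eventually_map.2 ha⟩
        have hzero : liminf q (nhdsWithin (0:ℝ) (Ioi 0)) = 0 := by
          rw [liminf_eq, hempty, Real.sSup_empty]
        rw [hzero] at hLq
        exact absurd hLq (not_lt.2 hc'.le)
      have hev := eventually_lt_of_lt_liminf hLq hnb
      filter_upwards [hev, self_mem_nhdsWithin] with ε hε hεpos
      rw [mem_Ioi] at hεpos
      have h1 : gg (x + ε) = (μ (thickening ε Ω')).toReal := by
        rw [hval (x + ε) (by linarith), hthick ε hεpos]
      have h2 : c' < (gg (x + ε) - gg x) / ε := by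
        rw [h1, hgx]
        exact hε
      have := (lt_div_iff₀ hεpos).1 h2
      linarith
    rcases eq_or_lt_of_le hx with heq | hxpos
    · refine main Ω hΩmeas (subset_refl _) hΩfin (fun ε hε => by rw [← heq, zero_add]) ?_
      rw [← heq, hg0, hm]
    · refine main (thickening x Ω) isOpen_thickening.measurableSet
        (self_subset_thickening hxpos Ω) (hfin_all x) (fun ε hε => ?_) (hval x hxpos)
      rw [thickening_thickening hε hxpos, add_comm]
  have hres := gronwall hσ hh hg0 hmpos hmono hdini
  rw [hval σ hσ] at hres
  exact hres
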